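/- Let p be an odd prime. The number of distinct sets among the Λ_{(i,j)}^p, as (i,j) ranges over Σ_p, is exactly (p² + 3)/4 when p > 3, and is exactly 3 when p = 3. -/

import Mathlib

lemma klein_count {α β : Type*} [DecidableEq α] [DecidableEq β] (s : Finset α) (F : α → β)
    (f g : α → α)
    (hf : ∀ x ∈ s, f x ∈ s) (hg : ∀ x ∈ s, g x ∈ s)
    (hff : ∀ x ∈ s, f (f x) = x) (hgg : ∀ x ∈ s, g (g x) = x)
    (hcomm : ∀ x ∈ s, f (g x) = g (f x))
    (hF : ∀ x ∈ s, ∀ y ∈ s, (F x = F y ↔ (y = x ∨ y = f x ∨ y = g x ∨ y = f (g x)))) :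
    4 * (s.image F).card =
      s.card + (s.filter fun x => f x = x).card + (s.filter fun x => g x = x).card
        + (s.filter fun x => f (g x) = x).card := by
  classical
  set w : α → ℕ := fun x =>
    1 + ((if f x = x then 1 else 0) + (if g x = x then 1 else 0) + (if f (g x) = x then 1 else 0))
    with hw
  have key : ∀ x ∈ s, (s.filter fun y => F y = F x) = ({x, f x, g x, f (g x)} : Finset α) := by
    intro x hx
    ext y
    simp only [Finset.mem_filter, Finset.mem_insert, Finset.mem_singleton]
    constructor
    · rintro ⟨hy, hFy⟩
      exact (hF x hx y hy).1 hFy.symm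
    · rintro (rfl | rfl | rfl | rfl)
      · exact ⟨hx, rfl⟩
      · exact ⟨hf x hx, ((hF x hx _ (hf x hx)).2 (Or.inr (Or.inl rfl))).symm⟩
      · exact ⟨hg x hx, ((hF x hx _ (hg x hx)).2 (Or.inr (Or.inr (Or.inl rfl)))).symm⟩
      · exact ⟨hf _ (hg x hx), ((hF x hx _ (hf _ (hg x hx))).2 (Or.inr (Or.inr (Or.inr rfl)))).symm⟩
  have fiber_sum : ∀ x ∈ s, (∑ y ∈ ({x, f x, g x, f (g x)} : Finset α), w y) = 4 := by
    intro x hx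
    by_cases hfx : f x = x <;> by_cases hgx : g x = x
    · -- both fixed
      have hfgx : f (g x) = x := by rw [hgx, hfx]
      have hset : ({x, f x, g x, f (g x)} : Finset α) = {x} := by
        rw [hfgx, hfx, hgx]; simp
      rw [hset, Finset.sum_singleton, hw]
      simp [hfx, hgx, hfgx]
    · -- f fixed, g not
      have hfgx : f (g x) = g x := (hcomm x hx).trans (by rw [hfx])
      have hxgx : ¬ x = g x := fun h => hgx h.symm
      have hset : ({x, f x, g x, f (g x)} : Finset α) = {x, g x} := by
        rw [hfgx, hfx]; ext y; simp; try tauto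
      rw [hset, Finset.sum_insert (by simpa using hxgx), Finset.sum_singleton, hw]
      simp [hfx, hgx, hfgx, hgg x hx, hxgx]
    · -- g fixed, f not
      have hfgx : f (g x) = f x := by rw [hgx]
      have hgfx : g (f x) = f x := (hcomm x hx).symm.trans hfgx
      have hxfx : ¬ x = f x := fun h => hfx h.symm
      have hset : ({x, f x, g x, f (g x)} : Finset α) = {x, f x} := by
        rw [hfgx, hgx]; ext y; simp; try tauto
      rw [hset, Finset.sum_insert (by simpa using hxfx), Finset.sum_singleton, hw]
      simp [hfx, hgx, hfgx, hgfx, hff x hx, hxfx]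
    · by_cases hfgx : f (g x) = x
      · -- rho fixed only
        have hgfx : g (f x) = x := (hcomm x hx).symm.trans hfgx
        have hfxgx : f x = g x := by
          have := hff (g x) (hg x hx)
          rw [hfgx] at this; exact this
        have hxfx : ¬ x = f x := fun h => hfx h.symm
        have hset : ({x, f x, g x, f (g x)} : Finset α) = {x, f x} := by
          rw [hfgx, ← hfxgx]; ext y; simp; tauto
        rw [hset, Finset.sum_insert (by simpa using hxfx), Finset.sum_singleton, hw]
        simp [hfx, hgx, hfgx, hgfx, ← hfxgx, hff x hx, hxfx]
      · -- free orbit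
        have hffx := hff x hx
        have hggx := hgg x hx
        have hcx := hcomm x hx
        have hffg := hff (g x) (hg x hx)   -- f (f (g x)) = g x
        have hggf := hgg (f x) (hf x hx)   -- g (g (f x)) = f x
        have d1 : ¬ x = f x := fun h => hfx h.symm
        have d2 : ¬ x = g x := fun h => hgx h.symm
        have d3 : ¬ x = f (g x) := fun h => hfgx h.symm
        have d4 : f x ≠ g x := by
          intro h
          exact hfgx (by rw [← h, hffx])
        have d5 : f x ≠ f (g x) := by
          intro h
          have := congrArg f h
          rw [hffx, hffg] at this
          exact hgx this.symm
        have d6 : g x ≠ f (g x) := by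
          intro h
          apply hfx
          have := congrArg g h
          rw [hggx, hcx, hggf] at this
          exact this.symm
        have hgfx : g (f x) = f (g x) := hcx.symm
        rw [Finset.sum_insert (by simp [d1, d2, d3]),
          Finset.sum_insert (by simp [d4, d5]),
          Finset.sum_insert (by simp [d6]), Finset.sum_singleton, hw]
        have c1 : ¬ f (f x) = f x := by rw [hffx]; exact d1
        have c2 : ¬ g (f x) = f x := by rw [hgfx]; exact fun h => d5 h.symm
        have c3 : ¬ f (g (f x)) = f x := by rw [hgfx, hffg]; exact fun h => d4 h.symm
        have c4 : ¬ f (g x) = g x := fun h => d6 h.symm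
        have c5 : ¬ g (g x) = g x := by rw [hggx]; exact d2
        have c6 : ¬ f (g (g x)) = g x := by rw [hggx]; exact d4
        have c7 : ¬ f (f (g x)) = f (g x) := by rw [hffg]; exact d6
        have c8 : ¬ g (f (g x)) = f (g x) := by
          rw [← hgfx, hggf, hgfx]; exact d5
        have c9 : ¬ f (g (f (g x))) = f (g x) := by
          rw [← hgfx, hggf, hffx, hgfx]; exact d3
        simp [hfx, hgx, hfgx, c1, c2, c3, c4, c5, c6, c7, c8, c9]
  calc 4 * (s.image F).card = ∑ _b ∈ s.image F, 4 := by
        rw [Finset.sum_const, smul_eq_mul, mul_comm]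
    _ = ∑ b ∈ s.image F, ∑ x ∈ s.filter fun x => F x = b, w x := by
        refine Finset.sum_congr rfl fun b hb => ?_
        obtain ⟨x, hx, rfl⟩ := Finset.mem_image.1 hb
        rw [key x hx]
        exact (fiber_sum x hx).symm
    _ = ∑ x ∈ s, w x :=
        Finset.sum_fiberwise_of_maps_to (fun x hx => Finset.mem_image_of_mem F hx) w
    _ = _ := by
        rw [hw]
        rw [Finset.sum_add_distrib, Finset.sum_const, smul_eq_mul, mul_one]
        rw [Finset.sum_add_distrib, Finset.sum_add_distrib]
        rw [← Finset.card_filter, ← Finset.card_filter, ← Finset.card_filter]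
        ring


/-- `Σ_p := {(i,j) ∈ (ℤ/pℤ)² : i ≠ 0, j ≠ 0, i+j+1 ≠ 0}`. -/
def SigmaP (p : ℕ) : Set (ZMod p × ZMod p) :=
  {ij | ij.1 ≠ 0 ∧ ij.2 ≠ 0 ∧ ij.1 + ij.2 + 1 ≠ 0}

/-- The indexed set `Λ_{(i,j)}^p ⊆ (ℤ/pℤ)² × {1,2,3}`, where `k := -(i+j+1)`. -/
def Lam (p : ℕ) (ij : ZMod p × ZMod p) : Finset ((ZMod p × ZMod p) × ℕ) :=
  let i := ij.1
  let j := ij.2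
  let k := -(i + j + 1)
  {((i, j), 1), ((j, k), 3), ((k, i), 2),
   ((i⁻¹ * j, i⁻¹), 2), ((i⁻¹, i⁻¹ * k), 1), ((i⁻¹ * k, i⁻¹ * j), 3),
   ((j⁻¹, i * j⁻¹), 3), ((i * j⁻¹, j⁻¹ * k), 2), ((j⁻¹ * k, j⁻¹), 1),
   ((j * k⁻¹, i * k⁻¹), 1), ((i * k⁻¹, k⁻¹), 3), ((k⁻¹, j * k⁻¹), 2)}

/-- `Σ_p` as a finset. -/
def SigmaF (p : ℕ) [NeZero p] : Finset (ZMod p × ZMod p) :=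
  Finset.univ.filter (fun ij => ij.1 ≠ 0 ∧ ij.2 ≠ 0 ∧ ij.1 + ij.2 + 1 ≠ 0)

def sg (p : ℕ) : ZMod p × ZMod p → ZMod p × ZMod p :=
  fun x => (x.1⁻¹, x.1⁻¹ * -(x.1 + x.2 + 1))

def tu (p : ℕ) : ZMod p × ZMod p → ZMod p × ZMod p :=
  fun x => (x.2⁻¹ * -(x.1 + x.2 + 1), x.2⁻¹)

lemma lam_def (p : ℕ) (a b : ZMod p) : Lam p (a, b) =
    {((a, b), 1), ((b, -(a+b+1)), 3), ((-(a+b+1), a), 2),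
     ((a⁻¹ * b, a⁻¹), 2), ((a⁻¹, a⁻¹ * -(a+b+1)), 1), ((a⁻¹ * -(a+b+1), a⁻¹ * b), 3),
     ((b⁻¹, a * b⁻¹), 3), ((a * b⁻¹, b⁻¹ * -(a+b+1)), 2), ((b⁻¹ * -(a+b+1), b⁻¹), 1),
     ((b * (-(a+b+1))⁻¹, a * (-(a+b+1))⁻¹), 1), ((a * (-(a+b+1))⁻¹, (-(a+b+1))⁻¹), 3),
     (((-(a+b+1))⁻¹, b * (-(a+b+1))⁻¹), 2)} := rfl

variable {p : ℕ} [Fact p.Prime]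

set_option maxHeartbeats 1000000 in
lemma lam_sg {i j : ZMod p} (hi : i ≠ 0) (hj : j ≠ 0) (hk : -(i + j + 1) ≠ 0) :
    Lam p (sg p (i, j)) = Lam p (i, j) := by
  set k := -(i + j + 1) with hkdef
  have hA : sg p (i, j) = (i⁻¹, i⁻¹ * k) := rfl
  have hk2 : -(i⁻¹ + i⁻¹ * k + 1) = i⁻¹ * j := by
    field_simp
    rw [hkdef]; ring
  rw [hA, lam_def, lam_def, ← hkdef, hk2]
  have B : (i⁻¹)⁻¹ * (i⁻¹ * k) = k := by field_simp
  have C : (i⁻¹)⁻¹ * (i⁻¹ * j) = j := by field_simp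
  have D : (i⁻¹ * k)⁻¹ = i * k⁻¹ := by rw [mul_inv, inv_inv]
  have E : (i⁻¹ * j)⁻¹ = i * j⁻¹ := by rw [mul_inv, inv_inv]
  rw [B, C, D, E]
  have F : i⁻¹ * (i * k⁻¹) = k⁻¹ := inv_mul_cancel_left₀ hi _
  have G : i⁻¹ * (i * j⁻¹) = j⁻¹ := inv_mul_cancel_left₀ hi _
  have H : (i * k⁻¹) * (i⁻¹ * j) = j * k⁻¹ := by
    field_simp; try ring
  have I : (i⁻¹ * k) * (i * j⁻¹) = j⁻¹ * k := by
    field_simp; try ring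
  rw [F, G, H, I, inv_inv]
  ext a
  simp only [Finset.mem_insert, Finset.mem_singleton]
  constructor <;> rintro (rfl|rfl|rfl|rfl|rfl|rfl|rfl|rfl|rfl|rfl|rfl|rfl) <;> simp

set_option maxHeartbeats 1000000 in
lemma lam_tu {i j : ZMod p} (hi : i ≠ 0) (hj : j ≠ 0) (hk : -(i + j + 1) ≠ 0) :
    Lam p (tu p (i, j)) = Lam p (i, j) := by
  set k := -(i + j + 1) with hkdef
  have hA : tu p (i, j) = (j⁻¹ * k, j⁻¹) := rfl
  have hk2 : -(j⁻¹ * k + j⁻¹ + 1) = i * j⁻¹ := by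
    field_simp
    rw [hkdef]; ring
  rw [hA, lam_def, lam_def, ← hkdef, hk2]
  have T1 : (j⁻¹ * k)⁻¹ = j * k⁻¹ := by rw [mul_inv, inv_inv]
  have T2 : (j⁻¹)⁻¹ = j := inv_inv j
  have T3 : (i * j⁻¹)⁻¹ = i⁻¹ * j := by rw [mul_inv, inv_inv]
  rw [T1, T2, T3]
  have U1 : (j * k⁻¹) * j⁻¹ = k⁻¹ := by field_simp; try ring
  have U2 : (j * k⁻¹) * (i * j⁻¹) = i * k⁻¹ := by field_simp; try ring
  have U3 : (j⁻¹ * k) * j = k := by field_simp; try ring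
  have U4 : j * (i * j⁻¹) = i := by field_simp; try ring
  have U5 : j⁻¹ * (i⁻¹ * j) = i⁻¹ := by field_simp; try ring
  have U6 : (j⁻¹ * k) * (i⁻¹ * j) = i⁻¹ * k := by field_simp; try ring
  rw [U1, U2, U3, U4, U5, U6]
  ext a
  simp only [Finset.mem_insert, Finset.mem_singleton]
  constructor <;> rintro (rfl|rfl|rfl|rfl|rfl|rfl|rfl|rfl|rfl|rfl|rfl|rfl) <;> simp

lemma mem_sigmaF {x : ZMod p × ZMod p} :
    x ∈ SigmaF p ↔ x.1 ≠ 0 ∧ x.2 ≠ 0 ∧ x.1 + x.2 + 1 ≠ 0 := by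
  simp [SigmaF]

lemma sg_mem {x : ZMod p × ZMod p} (hx : x ∈ SigmaF p) : sg p x ∈ SigmaF p := by
  obtain ⟨i, j⟩ := x
  rw [mem_sigmaF] at hx ⊢
  obtain ⟨hi, hj, hs⟩ := hx
  have hk : -(i + j + 1) ≠ 0 := neg_ne_zero.2 hs
  have hk2 : -(i⁻¹ + i⁻¹ * -(i + j + 1) + 1) = i⁻¹ * j := by field_simp; try ring
  refine ⟨inv_ne_zero hi, mul_ne_zero (inv_ne_zero hi) hk, fun h => ?_⟩
  simp only [sg] at h
  rw [h, neg_zero] at hk2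
  exact (mul_ne_zero (inv_ne_zero hi) hj) hk2.symm

lemma tu_mem {x : ZMod p × ZMod p} (hx : x ∈ SigmaF p) : tu p x ∈ SigmaF p := by
  obtain ⟨i, j⟩ := x
  rw [mem_sigmaF] at hx ⊢
  obtain ⟨hi, hj, hs⟩ := hx
  have hk : -(i + j + 1) ≠ 0 := neg_ne_zero.2 hs
  have hk2 : -(j⁻¹ * -(i + j + 1) + j⁻¹ + 1) = i * j⁻¹ := by field_simp; try ring
  refine ⟨mul_ne_zero (inv_ne_zero hj) hk, inv_ne_zero hj, fun h => ?_⟩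
  simp only [tu] at h
  rw [h, neg_zero] at hk2
  exact (mul_ne_zero hi (inv_ne_zero hj)) hk2.symm

lemma sg_sg {x : ZMod p × ZMod p} (hx : x ∈ SigmaF p) : sg p (sg p x) = x := by
  obtain ⟨i, j⟩ := x
  rw [mem_sigmaF] at hx
  obtain ⟨hi, hj, hs⟩ := hx
  have hk : -(i + j + 1) ≠ 0 := neg_ne_zero.2 hs
  simp only [sg, Prod.mk.injEq]
  refine ⟨inv_inv i, ?_⟩
  field_simp; try ring

lemma tu_tu {x : ZMod p × ZMod p} (hx : x ∈ SigmaF p) : tu p (tu p x) = x := by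
  obtain ⟨i, j⟩ := x
  rw [mem_sigmaF] at hx
  obtain ⟨hi, hj, hs⟩ := hx
  have hk : -(i + j + 1) ≠ 0 := neg_ne_zero.2 hs
  simp only [tu, Prod.mk.injEq]
  refine ⟨?_, inv_inv j⟩
  field_simp; try ring

lemma rho_eq {x : ZMod p × ZMod p} (hx : x ∈ SigmaF p) :
    sg p (tu p x) = (x.2 * (-(x.1 + x.2 + 1))⁻¹, x.1 * (-(x.1 + x.2 + 1))⁻¹) := by
  obtain ⟨i, j⟩ := x
  rw [mem_sigmaF] at hx
  obtain ⟨hi, hj, hs⟩ := hx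
  simp only at hi hj hs
  have hk : -(i + j + 1) ≠ 0 := neg_ne_zero.2 hs
  have hk2 : -(j⁻¹ * -(i + j + 1) + j⁻¹ + 1) = i * j⁻¹ := by field_simp; try ring
  simp only [sg, tu]
  rw [hk2, mul_inv, inv_inv, Prod.mk.injEq]
  refine ⟨rfl, ?_⟩
  have h9 : j * (-(i + j + 1))⁻¹ * (i * j⁻¹) = (j * j⁻¹) * (i * (-(i + j + 1))⁻¹) := by ring
  rw [h9, mul_inv_cancel₀ hj, one_mul]

lemma tu_sg_eq {x : ZMod p × ZMod p} (hx : x ∈ SigmaF p) :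
    tu p (sg p x) = (x.2 * (-(x.1 + x.2 + 1))⁻¹, x.1 * (-(x.1 + x.2 + 1))⁻¹) := by
  obtain ⟨i, j⟩ := x
  rw [mem_sigmaF] at hx
  obtain ⟨hi, hj, hs⟩ := hx
  simp only at hi hj hs
  have hk : -(i + j + 1) ≠ 0 := neg_ne_zero.2 hs
  have hk2 : -(i⁻¹ + i⁻¹ * -(i + j + 1) + 1) = i⁻¹ * j := by field_simp; try ring
  simp only [sg, tu]
  rw [hk2, mul_inv, inv_inv, Prod.mk.injEq]
  refine ⟨?_, rfl⟩
  have h9 : i * (-(i + j + 1))⁻¹ * (i⁻¹ * j) = (i * i⁻¹) * (j * (-(i + j + 1))⁻¹) := by ring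
  rw [h9, mul_inv_cancel₀ hi, one_mul]

lemma sg_tu_comm {x : ZMod p × ZMod p} (hx : x ∈ SigmaF p) :
    sg p (tu p x) = tu p (sg p x) := (rho_eq hx).trans (tu_sg_eq hx).symm

lemma lam_sg' {x : ZMod p × ZMod p} (hx : x ∈ SigmaF p) : Lam p (sg p x) = Lam p x := by
  obtain ⟨i, j⟩ := x
  have h := mem_sigmaF.1 hx
  exact lam_sg h.1 h.2.1 (neg_ne_zero.2 h.2.2)

lemma lam_tu' {x : ZMod p × ZMod p} (hx : x ∈ SigmaF p) : Lam p (tu p x) = Lam p x := by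
  obtain ⟨i, j⟩ := x
  have h := mem_sigmaF.1 hx
  exact lam_tu h.1 h.2.1 (neg_ne_zero.2 h.2.2)

lemma lam_key {x y : ZMod p × ZMod p} (hx : x ∈ SigmaF p) (hy : y ∈ SigmaF p) :
    Lam p x = Lam p y ↔ (y = x ∨ y = sg p x ∨ y = tu p x ∨ y = sg p (tu p x)) := by
  constructor
  · intro h
    obtain ⟨a, b⟩ := y
    have hmem : (((a, b) : ZMod p × ZMod p), 1) ∈ Lam p (a, b) := by
      rw [lam_def]; exact Finset.mem_insert_self _ _
    rw [← h] at hmem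
    obtain ⟨i, j⟩ := x
    rw [rho_eq hx]
    rw [lam_def] at hmem
    simp only [Finset.mem_insert, Finset.mem_singleton, Prod.mk.injEq] at hmem
    have hsg : sg p (i, j) = (i⁻¹, i⁻¹ * -(i + j + 1)) := rfl
    have htu : tu p (i, j) = (j⁻¹ * -(i + j + 1), j⁻¹) := rfl
    rcases hmem with ⟨⟨h1, h2⟩, _⟩ | ⟨_, h0⟩ | ⟨_, h0⟩ | ⟨_, h0⟩ | ⟨⟨h1, h2⟩, _⟩ |
      ⟨_, h0⟩ | ⟨_, h0⟩ | ⟨_, h0⟩ | ⟨⟨h1, h2⟩, _⟩ | ⟨⟨h1, h2⟩, _⟩ | ⟨_, h0⟩ | ⟨_, h0⟩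
    · exact Or.inl (by rw [h1, h2])
    all_goals try exact absurd h0 (by norm_num)
    · exact Or.inr (Or.inl (by rw [hsg, h1, h2]))
    · exact Or.inr (Or.inr (Or.inl (by rw [htu, h1, h2])))
    · exact Or.inr (Or.inr (Or.inr (by rw [h1, h2])))
  · have hx' := (mem_sigmaF.1 hx)
    obtain ⟨i, j⟩ := x
    obtain ⟨hi, hj, hs⟩ := hx'
    simp only at hi hj hs
    have hk : -(i + j + 1) ≠ 0 := neg_ne_zero.2 hs
    rintro (rfl | rfl | rfl | rfl)
    · rfl
    · exact (lam_sg hi hj hk).symm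
    · exact (lam_tu hi hj hk).symm
    · exact ((lam_sg' (tu_mem hx)).trans (lam_tu' hx)).symm

lemma card_sigmaF : (SigmaF p).card + 3 * p = p ^ 2 + 3 := by
  classical
  have hm1 : (-1 : ZMod p) ≠ 0 := neg_ne_zero.2 one_ne_zero
  have hcard : Fintype.card (ZMod p) = p := ZMod.card p
  have huniv : (Finset.univ : Finset (ZMod p × ZMod p)).card = p ^ 2 := by
    simp [Fintype.card_prod, hcard, sq]
  set A := (Finset.univ : Finset (ZMod p × ZMod p)).filter (fun ij => ij.1 = 0) with hA
  set B := (Finset.univ : Finset (ZMod p × ZMod p)).filter (fun ij => ij.2 = 0) with hB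
  set C := (Finset.univ : Finset (ZMod p × ZMod p)).filter (fun ij => ij.1 + ij.2 + 1 = 0)
    with hC
  have hcardA : A.card = p := by
    have : A = ({0} : Finset (ZMod p)) ×ˢ Finset.univ := by
      ext ⟨a, b⟩; simp [hA, eq_comm]
    rw [this, Finset.card_product]
    simp [hcard]
  have hcardB : B.card = p := by
    have : B = Finset.univ ×ˢ ({0} : Finset (ZMod p)) := by
      ext ⟨a, b⟩; simp [hB, eq_comm]
    rw [this, Finset.card_product]
    simp [hcard]
  have hcardC : C.card = p := by
    have : C = Finset.univ.image (fun j : ZMod p => (-(j + 1), j)) := by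
      ext ⟨a, b⟩
      simp only [hC, Finset.mem_filter, Finset.mem_univ, true_and, Finset.mem_image,
        Prod.mk.injEq]
      constructor
      · intro h
        exact ⟨b, by linear_combination -h, rfl⟩
      · rintro ⟨c, h1, rfl⟩
        linear_combination -h1
    rw [this, Finset.card_image_of_injective _ (fun a b h => by simpa using (Prod.mk.injEq _ _ _ _ ▸ h).2)]
    simp [hcard]
  have hAB : A ∩ B = {((0 : ZMod p), (0 : ZMod p))} := by
    ext ⟨a, b⟩
    simp [hA, hB, Prod.ext_iff]
  have hAC : A ∩ C = {((0 : ZMod p), (-1 : ZMod p))} := by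
    ext ⟨a, b⟩
    simp only [hA, hC, Finset.mem_inter, Finset.mem_filter, Finset.mem_univ, true_and,
      Finset.mem_singleton, Prod.mk.injEq]
    constructor
    · rintro ⟨rfl, h⟩
      exact ⟨rfl, by linear_combination h⟩
    · rintro ⟨rfl, rfl⟩
      exact ⟨rfl, by ring⟩
  have hBC : B ∩ C = {((-1 : ZMod p), (0 : ZMod p))} := by
    ext ⟨a, b⟩
    simp only [hB, hC, Finset.mem_inter, Finset.mem_filter, Finset.mem_univ, true_and,
      Finset.mem_singleton, Prod.mk.injEq]
    constructor
    · rintro ⟨rfl, h⟩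
      exact ⟨by linear_combination h, rfl⟩
    · rintro ⟨rfl, rfl⟩
      exact ⟨rfl, by ring⟩
  have h1 : (A ∪ B).card + (A ∩ B).card = A.card + B.card := Finset.card_union_add_card_inter A B
  have h2 : ((A ∪ B) ∪ C).card + ((A ∪ B) ∩ C).card = (A ∪ B).card + C.card :=
    Finset.card_union_add_card_inter _ _
  have hdistrib : (A ∪ B) ∩ C = (A ∩ C) ∪ (B ∩ C) := Finset.union_inter_distrib_right A B C
  have hcard2 : ((A ∪ B) ∩ C).card = 2 := by
    rw [hdistrib, hAC, hBC]
    rw [Finset.card_union_of_disjoint (by simp [Prod.ext_iff, hm1.symm])]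
    simp
  have hsplit : (SigmaF p).card + ((A ∪ B) ∪ C).card = p ^ 2 := by
    have hbad : (Finset.univ.filter
        (fun ij : ZMod p × ZMod p => ¬(ij.1 ≠ 0 ∧ ij.2 ≠ 0 ∧ ij.1 + ij.2 + 1 ≠ 0)))
        = (A ∪ B) ∪ C := by
      ext ⟨a, b⟩
      simp only [hA, hB, hC, Finset.mem_filter, Finset.mem_univ, true_and, Finset.mem_union]
      tauto
    rw [← hbad, ← huniv]
    exact Finset.card_filter_add_card_filter_not _
  rw [hAB] at h1
  simp only [Finset.card_singleton] at h1
  omega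

lemma zmod_two_ne_zero (hodd : Odd p) : (2 : ZMod p) ≠ 0 := by
  intro h
  have hp := Fact.out (p := p.Prime)
  have hd : (p : ℕ) ∣ 2 := by
    have : ((2 : ℕ) : ZMod p) = 0 := by exact_mod_cast h
    exact (ZMod.natCast_eq_zero_iff 2 p).1 this
  have hle := Nat.le_of_dvd (by norm_num) hd
  have h2 := hp.two_le
  obtain ⟨m, hm⟩ := hodd
  omega

lemma card_fix_sg (hodd : Odd p) : ((SigmaF p).filter fun x => sg p x = x).card = p := by
  classical
  have h2 : (2 : ZMod p) ≠ 0 := zmod_two_ne_zero hodd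
  have hm1 : (-1 : ZMod p) ≠ 0 := neg_ne_zero.2 one_ne_zero
  have hm11 : (-1 : ZMod p) ≠ 1 := fun h => h2 (by linear_combination -h)
  have hinv : ((-1 : ZMod p))⁻¹ = -1 := by
    rw [inv_neg, inv_one]
  have hset : (SigmaF p).filter (fun x => sg p x = x) =
      insert ((1 : ZMod p), (-1 : ZMod p))
        ((Finset.univ.filter fun j : ZMod p => j ≠ 0).image fun j => ((-1 : ZMod p), j)) := by
    ext ⟨a, b⟩
    rw [Finset.mem_filter]
    simp only [Finset.mem_filter, mem_sigmaF, Finset.mem_insert, Finset.mem_image,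
      Finset.mem_univ, true_and, Prod.mk.injEq, sg]
    constructor
    · rintro ⟨⟨ha, hb, hs⟩, h1, h2'⟩
      have haa : a * a = 1 := by rw [show a * a = a⁻¹ * a from by rw [h1]]; exact inv_mul_cancel₀ ha
      rcases mul_self_eq_one_iff.1 haa with rfl | rfl
      · left
        refine ⟨rfl, ?_⟩
        rw [inv_one, one_mul] at h2'
        have hz : (2 : ZMod p) * (b + 1) = 0 := by linear_combination -h2'
        rcases mul_eq_zero.1 hz with h | h
        · exact absurd h h2
        · linear_combination h
      · right; exact ⟨b, hb, rfl, rfl⟩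
    · rintro (⟨rfl, rfl⟩ | ⟨c, hc, rfl, rfl⟩)
      · refine ⟨⟨one_ne_zero, hm1, by norm_num⟩, by norm_num, ?_⟩
        rw [inv_one, one_mul]
        ring
      · refine ⟨⟨hm1, hc, fun h => hc (by linear_combination h)⟩, hinv, ?_⟩
        rw [hinv]
        ring
  rw [hset, Finset.card_insert_of_notMem (by simp [Prod.ext_iff, hm11]),
    Finset.card_image_of_injective _ (fun a b h => by simpa using h),
    Finset.filter_ne', Finset.card_erase_of_mem (Finset.mem_univ _)]
  have : Fintype.card (ZMod p) = p := ZMod.card p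
  have hp2 := (Fact.out (p := p.Prime)).two_le
  simp [this]
  omega

lemma card_fix_tu (hodd : Odd p) : ((SigmaF p).filter fun x => tu p x = x).card = p := by
  classical
  have h2 : (2 : ZMod p) ≠ 0 := zmod_two_ne_zero hodd
  have hm1 : (-1 : ZMod p) ≠ 0 := neg_ne_zero.2 one_ne_zero
  have hm11 : (-1 : ZMod p) ≠ 1 := fun h => h2 (by linear_combination -h)
  have hinv : ((-1 : ZMod p))⁻¹ = -1 := by
    rw [inv_neg, inv_one]
  have hset : (SigmaF p).filter (fun x => tu p x = x) =
      insert ((-1 : ZMod p), (1 : ZMod p))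
        ((Finset.univ.filter fun j : ZMod p => j ≠ 0).image fun j => (j, (-1 : ZMod p))) := by
    ext ⟨a, b⟩
    rw [Finset.mem_filter]
    simp only [Finset.mem_filter, mem_sigmaF, Finset.mem_insert, Finset.mem_image,
      Finset.mem_univ, true_and, Prod.mk.injEq, tu]
    constructor
    · rintro ⟨⟨ha, hb, hs⟩, h1, h2'⟩
      have hbb : b * b = 1 := by rw [show b * b = b⁻¹ * b from by rw [h2']]; exact inv_mul_cancel₀ hb
      rcases mul_self_eq_one_iff.1 hbb with rfl | rfl
      · left
        refine ⟨?_, rfl⟩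
        rw [inv_one, one_mul] at h1
        have hz : (2 : ZMod p) * (a + 1) = 0 := by linear_combination -h1
        rcases mul_eq_zero.1 hz with h | h
        · exact absurd h h2
        · linear_combination h
      · right; exact ⟨a, ha, rfl, rfl⟩
    · rintro (⟨rfl, rfl⟩ | ⟨c, hc, rfl, rfl⟩)
      · refine ⟨⟨hm1, one_ne_zero, by norm_num⟩, ?_, by rw [inv_one]⟩
        rw [inv_one, one_mul]
        ring
      · refine ⟨⟨hc, hm1, fun h => hc (by linear_combination h)⟩, ?_, hinv⟩
        rw [hinv]
        ring
  rw [hset, Finset.card_insert_of_notMem (by simp [Prod.ext_iff, hm11]),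
    Finset.card_image_of_injective _ (fun a b h => by simpa using h),
    Finset.filter_ne', Finset.card_erase_of_mem (Finset.mem_univ _)]
  have : Fintype.card (ZMod p) = p := ZMod.card p
  have hp2 := (Fact.out (p := p.Prime)).two_le
  simp [this]
  omega

lemma card_fix_rho (hodd : Odd p) : ((SigmaF p).filter fun x => sg p (tu p x) = x).card = p := by
  classical
  have h2 : (2 : ZMod p) ≠ 0 := zmod_two_ne_zero hodd
  have hm1 : (-1 : ZMod p) ≠ 0 := neg_ne_zero.2 one_ne_zero
  have hm11 : (-1 : ZMod p) ≠ 1 := fun h => h2 (by linear_combination -h)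
  have hinv : ((-1 : ZMod p))⁻¹ = -1 := by
    rw [inv_neg, inv_one]
  have hcongr : (SigmaF p).filter (fun x => sg p (tu p x) = x) =
      (SigmaF p).filter
        (fun x => (x.2 * (-(x.1 + x.2 + 1))⁻¹, x.1 * (-(x.1 + x.2 + 1))⁻¹) = x) :=
    Finset.filter_congr (fun x hx => by rw [rho_eq hx])
  have hset : (SigmaF p).filter
      (fun x => (x.2 * (-(x.1 + x.2 + 1))⁻¹, x.1 * (-(x.1 + x.2 + 1))⁻¹) = x) =
      insert ((-1 : ZMod p), (-1 : ZMod p))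
        ((Finset.univ.filter fun j : ZMod p => j ≠ 0).image fun j => (j, -j)) := by
    ext ⟨a, b⟩
    simp only [Finset.mem_filter, mem_sigmaF, Finset.mem_insert, Finset.mem_image,
      Finset.mem_univ, true_and, Prod.mk.injEq]
    constructor
    · rintro ⟨⟨ha, hb, hs⟩, h1, h2'⟩
      have hk : -(a + b + 1) ≠ 0 := neg_ne_zero.2 hs
      have hba : b = a * -(a + b + 1) := by
        have h9 := congrArg (fun t => t * -(a + b + 1)) h1
        rw [inv_mul_cancel_right₀ hk] at h9
        exact h9
      have hab : a = b * -(a + b + 1) := by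
        have h9 := congrArg (fun t => t * -(a + b + 1)) h2'
        rw [inv_mul_cancel_right₀ hk] at h9
        exact h9
      have hkk : -(a + b + 1) * -(a + b + 1) = 1 := by
        refine mul_left_cancel₀ ha ?_
        rw [mul_one]
        calc a * (-(a + b + 1) * -(a + b + 1)) = (a * -(a + b + 1)) * -(a + b + 1) := by ring
          _ = b * -(a + b + 1) := by rw [← hba]
          _ = a := hab.symm
      rcases mul_self_eq_one_iff.1 hkk with hk1 | hk1
      · left
        have ha1 : a = -1 := by
          have hz : (2 : ZMod p) * (a + 1) = 0 := by
            have hba' : b = a := by rw [hba, hk1, mul_one]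
            linear_combination -hk1 - hba'
          rcases mul_eq_zero.1 hz with h | h
          · exact absurd h h2
          · linear_combination h
        refine ⟨ha1, ?_⟩
        rw [hba, hk1, mul_one, ha1]
      · right
        refine ⟨a, ha, rfl, ?_⟩
        rw [hba, hk1, mul_neg_one]
    · rintro (⟨rfl, rfl⟩ | ⟨c, hc, rfl, rfl⟩)
      · have hk1 : -((-1 : ZMod p) + -1 + 1) = 1 := by ring
        refine ⟨⟨hm1, hm1, fun h => hm1 (by linear_combination h)⟩, ?_, ?_⟩ <;>
          rw [hk1, inv_one, mul_one]
      · have hk1 : -(c + -c + 1) = (-1 : ZMod p) := by ring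
        refine ⟨⟨hc, neg_ne_zero.2 hc, fun h => one_ne_zero (by linear_combination h)⟩, ?_, ?_⟩ <;>
          rw [hk1, hinv] <;> ring
  rw [hcongr, hset]
  have hne : ((-1 : ZMod p), (-1 : ZMod p)) ∉
      ((Finset.univ.filter fun j : ZMod p => j ≠ 0).image fun j => (j, -j)) := by
    simp only [Finset.mem_image, Finset.mem_filter, Finset.mem_univ, true_and, Prod.mk.injEq,
      not_exists]
    rintro c ⟨hc, rfl, hc2⟩
    exact hm11 (by linear_combination -hc2)
  rw [Finset.card_insert_of_notMem hne,
    Finset.card_image_of_injective _ (fun a b h => by simpa using (Prod.mk.injEq _ _ _ _ ▸ h).1),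
    Finset.filter_ne', Finset.card_erase_of_mem (Finset.mem_univ _)]
  have : Fintype.card (ZMod p) = p := ZMod.card p
  have hp2 := (Fact.out (p := p.Prime)).two_le
  simp [this]
  omega

theorem stmt_16 (p : ℕ) [Fact p.Prime] (hodd : Odd p) :
    (3 < p → ((SigmaF p).image (Lam p)).card = (p ^ 2 + 3) / 4) ∧
    (p = 3 → ((SigmaF p).image (Lam p)).card = 3) := by
  have hkc := klein_count (SigmaF p) (Lam p) (sg p) (tu p)
    (fun x hx => sg_mem hx) (fun x hx => tu_mem hx)
    (fun x hx => sg_sg hx) (fun x hx => tu_tu hx)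
    (fun x hx => sg_tu_comm hx)
    (fun x hx y hy => lam_key hx hy)
  rw [card_fix_sg hodd, card_fix_tu hodd, card_fix_rho hodd] at hkc
  have hs := card_sigmaF (p := p)
  have hmain : ((SigmaF p).image (Lam p)).card = (p ^ 2 + 3) / 4 := by omega
  refine ⟨fun _ => hmain, fun h3 => ?_⟩
  subst h3
  rw [hmain]
  norm_num
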